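/- Let Λ be a torsion-free abelian group, M an abelian group with an additive involution σ, and Φ : Λ → M, Ψ : M → Λ group homomorphisms satisfying Ψ ∘ Φ = −2·id_Λ and Φ ∘ Ψ = σ − id_M. Assume {m ∈ M : σm = −m} = (σ − 1)M. Then Φ is injective and its image equals Pr(M, σ) = (σ − 1)M. -/

import Mathlib

/-- Let `Λ` be a torsion-free abelian group, `M` an abelian group with an
additive involution `σ`, and `Φ : Λ → M`, `Ψ : M → Λ` group homomorphisms with
`Ψ ∘ Φ = −2·id` and `Φ ∘ Ψ = σ − id`.  Assume `{m : σm = −m} = (σ − 1)M`.  Then `Φ` is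
injective and its image equals the Prym part `Pr(M, σ) = (σ − 1)M`. -/
theorem abelJacobi_injective_range_eq_prym
    {Λ M : Type*} [AddCommGroup Λ] [AddCommGroup M]
    (htf : ∀ (n : ℤ) (x : Λ), n • x = 0 → n = 0 ∨ x = 0)
    (σ : AddMonoid.End M) (hσ : σ * σ = 1)
    (Φ : Λ →+ M) (Ψ : M →+ Λ)
    (hΨΦ : ∀ x : Λ, Ψ (Φ x) = -(2 • x))
    (hΦΨ : ∀ m : M, Φ (Ψ m) = σ m - m)
    (hH1 : ∀ m : M, σ m = -m ↔ m ∈ AddMonoidHom.range (σ - 1 : AddMonoid.End M)) :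
    Function.Injective Φ ∧
      Φ.range = AddMonoidHom.range (σ - 1 : AddMonoid.End M) := by
  constructor
  · intro x y hxy
    have h3 : x + x = y + y := by
      have h := hΨΦ x
      rw [hxy, hΨΦ y] at h
      have := neg_injective h
      simpa [two_smul] using this.symm
    have h2 : (2:ℤ) • (x - y) = 0 := by
      rw [two_smul]
      have : (x - y) + (x - y) = (x + x) - (y + y) := by abel
      rw [this, h3, sub_self]
    rcases htf 2 (x - y) h2 with h | h
    · exact absurd h (by norm_num)
    · exact sub_eq_zero.mp h
  · ext m
    constructor
    · rintro ⟨x, rfl⟩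
      rw [← hH1]
      have := hΦΨ (Φ x)
      rw [hΨΦ x] at this
      have : σ (Φ x) - Φ x = -(2 • Φ x) := by
        rw [← this, map_neg, map_nsmul]
      have : σ (Φ x) = Φ x - 2 • Φ x := by
        rw [eq_sub_iff_add_eq, ← sub_add_cancel (σ (Φ x)) (Φ x), this]
        abel
      rw [this]; abel
    · rintro ⟨n, rfl⟩
      exact ⟨Ψ n, (hΦΨ n).trans rfl⟩
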